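/- Let Y be the Moore–Penrose pseudoinverse of X, and let b ∈ ℝ^n with ‖b‖₂ = 1 and B b = β b for some β ≠ 0. Then β · ‖Yᵀ b‖₂² = 1; in particular β > 0. -/

import Mathlib

open Matrix

lemma vecMulVec_mulVec' {n : ℕ} (u v w : Fin n → ℝ) :
    (vecMulVec u v).mulVec w = (v ⬝ᵥ w) • u := by
  ext i
  simp [vecMulVec_apply, mulVec, dotProduct, Finset.mul_sum, mul_comm, mul_assoc, mul_left_comm]

/-- If `Y` is the Moore–Penrose pseudoinverse of `X` and `b` is a unit
vector with `B b = β b` for some `β ≠ 0`, then `β · ‖Yᵀ b‖₂² = 1`; in particular `β > 0`. -/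
theorem stmt6 {p n : ℕ} (X : Matrix (Fin p) (Fin n) ℝ)
    (e : Fin n → ℝ) (he : e = fun _ => (1 : ℝ))
    (d : Fin n → ℝ) (hd : d = (Xᵀ * X).mulVec e)
    (twoM : ℝ) (htwoM : twoM = e ⬝ᵥ (Xᵀ * X).mulVec e) (hm : twoM ≠ 0)
    (B : Matrix (Fin n) (Fin n) ℝ)
    (hB : B = Xᵀ * X - twoM⁻¹ • vecMulVec d d)
    (Y : Matrix (Fin n) (Fin p) ℝ)
    (hY₁ : X * Y * X = X) (hY₂ : Y * X * Y = Y)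
    (hY₃ : (X * Y)ᵀ = X * Y) (hY₄ : (Y * X)ᵀ = Y * X)
    (b : Fin n → ℝ) (hb : Real.sqrt (b ⬝ᵥ b) = 1)
    (β : ℝ) (hβ : β ≠ 0) (hBb : B.mulVec b = β • b) :
    β * (Yᵀ.mulVec b ⬝ᵥ Yᵀ.mulVec b) = 1 ∧ 0 < β := by
  -- b ⬝ b = 1
  have hbb_nonneg : (0:ℝ) ≤ b ⬝ᵥ b := by
    simpa [dotProduct] using Finset.sum_nonneg fun i _ => mul_self_nonneg (b i)
  have hbb : b ⬝ᵥ b = 1 := by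
    have := congrArg (fun x => x ^ 2) hb
    simpa [Real.sq_sqrt hbb_nonneg] using this
  -- matrix identities
  have hYX : Yᵀ * Xᵀ = X * Y := by rw [← transpose_mul, hY₃]
  have hXY : Xᵀ * Yᵀ = Y * X := by rw [← transpose_mul, hY₄]
  have hA : Yᵀ * (Xᵀ * X) = X := by
    rw [← Matrix.mul_assoc, hYX, hY₁]
  have hXt : (Y * X) * Xᵀ = Xᵀ := by
    have := congrArg transpose hY₁
    rw [transpose_mul, transpose_mul] at this
    calc Y * X * Xᵀ = Xᵀ * Yᵀ * Xᵀ := by rw [← hXY]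
      _ = Xᵀ := by rw [Matrix.mul_assoc]; exact this
  have hP : (Y * X) * (Xᵀ * X) = Xᵀ * X := by
    rw [← Matrix.mul_assoc, hXt]
  -- B b expanded
  have hBb' : B.mulVec b = (Xᵀ * X).mulVec b - (twoM⁻¹ * (d ⬝ᵥ b)) • d := by
    rw [hB, sub_mulVec, smul_mulVec, vecMulVec_mulVec', smul_smul]
  -- d ⬝ b = e ⬝ (XᵀX b)
  have hsymm : (Xᵀ * X)ᵀ = Xᵀ * X := by rw [transpose_mul, transpose_transpose]
  have hdb : e ⬝ᵥ (Xᵀ * X).mulVec b = d ⬝ᵥ b := by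
    rw [dotProduct_mulVec, hd, ← vecMul_transpose, hsymm]
  have hed : e ⬝ᵥ d = twoM := by rw [hd, htwoM]
  -- e ⬝ b = 0
  have heb : e ⬝ᵥ b = 0 := by
    have h1 : e ⬝ᵥ B.mulVec b = β * (e ⬝ᵥ b) := by
      rw [hBb, dotProduct_smul, smul_eq_mul]
    have h2 : e ⬝ᵥ B.mulVec b = 0 := by
      rw [hBb', dotProduct_sub, hdb, dotProduct_smul, smul_eq_mul, hed]
      field_simp
      ring
    have := h1.symm.trans h2
    exact (mul_eq_zero.1 this).resolve_left hβ
  -- YX b = b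
  have hYXd : (Y * X).mulVec d = d := by
    rw [hd, mulVec_mulVec, hP]
  have hYXb : (Y * X).mulVec b = b := by
    have h1 : (Y * X).mulVec (B.mulVec b) = B.mulVec b := by
      rw [hBb', mulVec_sub, mulVec_smul, mulVec_mulVec, hP, hYXd]
    rw [hBb, mulVec_smul] at h1
    have : β • ((Y * X).mulVec b - b) = 0 := by
      rw [smul_sub, h1, sub_self]
    have := smul_eq_zero.1 this
    exact sub_eq_zero.1 (this.resolve_left hβ)
  -- Yᵀ d = X e
  have hYd : Yᵀ.mulVec d = X.mulVec e := by
    rw [hd, mulVec_mulVec, hA]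
  -- main computation
  have hmain : β * (Yᵀ.mulVec b ⬝ᵥ Yᵀ.mulVec b) = 1 := by
    have h1 : β * (Yᵀ.mulVec b ⬝ᵥ Yᵀ.mulVec b)
        = Yᵀ.mulVec (B.mulVec b) ⬝ᵥ Yᵀ.mulVec b := by
      rw [hBb, mulVec_smul, smul_dotProduct, smul_eq_mul]
    have h2 : Yᵀ.mulVec (B.mulVec b)
        = X.mulVec (b - (twoM⁻¹ * (d ⬝ᵥ b)) • e) := by
      rw [hBb', mulVec_sub, mulVec_smul, mulVec_mulVec, hA, hYd,
        mulVec_sub, mulVec_smul]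
    have h3 : Xᵀ.mulVec (Yᵀ.mulVec b) = b := by
      rw [mulVec_mulVec, hXY, hYXb]
    rw [h1, h2, dotProduct_comm, dotProduct_mulVec, ← mulVec_transpose, h3, dotProduct_sub, dotProduct_smul, smul_eq_mul,
      hbb, dotProduct_comm b e, heb]
    ring
  refine ⟨hmain, ?_⟩
  by_contra h
  push_neg at h
  have hnn : (0:ℝ) ≤ Yᵀ.mulVec b ⬝ᵥ Yᵀ.mulVec b := by
    simpa [dotProduct] using Finset.sum_nonneg fun i _ => mul_self_nonneg (Yᵀ.mulVec b i)
  nlinarith
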